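/- Let u be a real-analytic complex-valued function on an open connected set Ω ⊂ C satisfying ∂u/∂z̄ + a(z)u + b(z)·conj(u) = 0 with a, b real-analytic (this system is elliptic, so u is automatically real-analytic if a priori smooth). If u is not identically 0 and u(z₀) = 0, then there exist an integer m ≥ 1 and C ≠ 0 such that u(z) = C(z − z₀)^m + O(|z − z₀|^{m+1}); in particular all zeros of u are isolated. -/

import Mathlib

open scoped Topology
open Asymptotics

/-- Wirtinger derivative `∂u/∂z̄`. -/
noncomputable def dbar (u : ℂ → ℂ) (z : ℂ) : ℂ :=
  (fderiv ℝ u z 1 + Complex.I * fderiv ℝ u z Complex.I) / 2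

section helpers

open Filter

lemma derivSeries_congr (p q : FormalMultilinearSeries ℝ ℂ ℂ) (k : ℕ) (h : p (1 + k) = q (1 + k)) :
    p.derivSeries k = q.derivSeries k := by
  unfold FormalMultilinearSeries.derivSeries FormalMultilinearSeries.changeOriginSeries
    FormalMultilinearSeries.changeOriginSeriesTerm
  simp only [ContinuousLinearMap.compFormalMultilinearSeries_apply]
  simp only [ContinuousLinearMap.compFormalMultilinearSeries, h]

lemma derivSeries_zero (k : ℕ) : (0 : FormalMultilinearSeries ℝ ℂ ℂ).derivSeries k = 0 := by
  unfold FormalMultilinearSeries.derivSeries FormalMultilinearSeries.changeOriginSeries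
    FormalMultilinearSeries.changeOriginSeriesTerm
  simp only [ContinuousLinearMap.compFormalMultilinearSeries_apply]
  ext v w
  simp [ContinuousLinearMap.compFormalMultilinearSeries]

lemma hasFPowerSeriesOnBall_diag (n : ℕ) (M : ContinuousMultilinearMap ℝ (fun _ : Fin n => ℂ) ℂ) :
    HasFPowerSeriesOnBall (fun w => M (fun _ => w))
      (Function.update (0 : FormalMultilinearSeries ℝ ℂ ℂ) n M) 0 ⊤ := by
  refine ⟨?_, ?_, ?_⟩
  · exact le_of_eq (FormalMultilinearSeries.radius_eq_top_of_forall_image_add_eq_zero _ (n + 1)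
      (fun m => Function.update_of_ne (show m + (n + 1) ≠ n by omega) _ _)).symm
  · exact ENNReal.zero_lt_top
  · intro y _
    rw [zero_add]
    have h1 : ∀ b' : ℕ, b' ≠ n →
        (Function.update (0 : FormalMultilinearSeries ℝ ℂ ℂ) n M) b' (fun _ => y) = 0 := by
      intro b' hb'
      erw [Function.update_of_ne hb']
      rfl
    have := hasSum_single (f := fun k =>
      (Function.update (0 : FormalMultilinearSeries ℝ ℂ ℂ) n M) k (fun _ => y)) n h1
    erw [Function.update_self] at this
    exact this

lemma fderiv_diag (p : FormalMultilinearSeries ℝ ℂ ℂ) (k : ℕ) (w : ℂ) :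
    fderiv ℝ (fun x => p (k + 1) (fun _ => x)) w = p.derivSeries k (fun _ => w) := by
  set q : FormalMultilinearSeries ℝ ℂ ℂ :=
    Function.update (0 : FormalMultilinearSeries ℝ ℂ ℂ) (k + 1) (p (k + 1)) with hq
  have hb := (hasFPowerSeriesOnBall_diag (k + 1) (p (k + 1))).fderiv
  have hsum := hb.hasSum (y := w) (by simp)
  rw [zero_add] at hsum
  have h0 : ∀ j : ℕ, j ≠ k → q.derivSeries j (fun _ => w) = 0 := by
    intro j hj
    have hz : q (1 + j) = (0 : FormalMultilinearSeries ℝ ℂ ℂ) (1 + j) := by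
      rw [hq]
      exact Function.update_of_ne (by omega) _ _
    rw [derivSeries_congr _ _ j hz, derivSeries_zero]
    rfl
  have h2 := hasSum_single (f := fun j => q.derivSeries j (fun _ => w)) k h0
  have h3 : fderiv ℝ (fun x => p (k + 1) (fun _ => x)) w = q.derivSeries k (fun _ => w) :=
    hsum.unique h2
  have h4 : q.derivSeries k = p.derivSeries k := by
    refine derivSeries_congr _ _ k ?_
    rw [hq, show 1 + k = k + 1 from by omega]
    exact Function.update_self _ _ _
  rw [h3, h4]

lemma homog_eq_zero_of_isBigO {g : ℂ → ℂ} {n : ℕ}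
    (hom : ∀ t : ℝ, 0 < t → ∀ w : ℂ, g (t • w) = t ^ n • g w)
    (hO : g =O[nhds (0 : ℂ)] fun w => ‖w‖ ^ (n + 1)) :
    ∀ w : ℂ, g w = 0 := by
  intro w
  obtain ⟨c, hc⟩ := hO.bound
  rw [Metric.eventually_nhds_iff] at hc
  obtain ⟨ε, hε, hb⟩ := hc
  have key : ∀ t : ℝ, 0 < t → t < ε / (‖w‖ + 1) → ‖g w‖ ≤ c * ‖w‖ ^ (n + 1) * t := by
    intro t ht ht2
    have hws : ‖t • w‖ < ε := by
      rw [norm_smul, Real.norm_eq_abs, abs_of_pos ht]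
      rw [lt_div_iff₀ (by positivity)] at ht2
      nlinarith [norm_nonneg w]
    have hbd := hb (show dist (t • w) 0 < ε by simpa [dist_zero_right] using hws)
    rw [hom t ht w] at hbd
    have h1 : ‖t ^ n • g w‖ = t ^ n * ‖g w‖ := by
      rw [norm_smul, Real.norm_eq_abs, abs_of_pos (pow_pos ht n)]
    have h2 : ‖‖t • w‖ ^ (n + 1)‖ = (t * ‖w‖) ^ (n + 1) := by
      rw [norm_pow, norm_norm, norm_smul, Real.norm_eq_abs, abs_of_pos ht]
    rw [h1, h2] at hbd
    have hle : t ^ n * ‖g w‖ ≤ t ^ n * (c * ‖w‖ ^ (n + 1) * t) := by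
      rw [mul_pow, pow_succ t n] at hbd
      nlinarith
    exact le_of_mul_le_mul_left hle (pow_pos ht n)
  have hlim : Tendsto (fun t : ℝ => c * ‖w‖ ^ (n + 1) * t) (nhdsWithin 0 (Set.Ioi 0)) (nhds 0) := by
    have := (tendsto_id (x := nhdsWithin (0:ℝ) (Set.Ioi 0))).mono_right nhdsWithin_le_nhds
    simpa using (this.const_mul (c * ‖w‖ ^ (n + 1)))
  have hev : ∀ᶠ t in nhdsWithin (0:ℝ) (Set.Ioi 0), ‖g w‖ ≤ c * ‖w‖ ^ (n + 1) * t := by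
    filter_upwards [Ioo_mem_nhdsGT_of_mem (by constructor <;> positivity :
      (0:ℝ) ∈ Set.Ico 0 (ε / (‖w‖ + 1)))] with t ht
    exact key t ht.1 ht.2
  have : ‖g w‖ ≤ 0 := ge_of_tendsto hlim hev
  simpa using le_antisymm this (norm_nonneg _)

end helpers

theorem modified_CR_taylor_expansion_at_zero
    (Ω : Set ℂ) (hΩ : IsOpen Ω) (hconn : IsConnected Ω)
    (a b u : ℂ → ℂ)
    (ha : AnalyticOnNhd ℝ a Ω) (hb : AnalyticOnNhd ℝ b Ω) (hu : AnalyticOnNhd ℝ u Ω)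
    (heq : ∀ z ∈ Ω, dbar u z + a z * u z + b z * (starRingEnd ℂ) (u z) = 0)
    (hne : ∃ z ∈ Ω, u z ≠ 0)
    (z₀ : ℂ) (hz₀ : z₀ ∈ Ω) (hu0 : u z₀ = 0) :
    ∃ (m : ℕ) (C : ℂ), 1 ≤ m ∧ C ≠ 0 ∧
      (fun z => u z - C * (z - z₀) ^ m) =O[𝓝 z₀] (fun z => ‖z - z₀‖ ^ (m + 1)) ∧
      ∃ ε > 0, ∀ w : ℂ, w ≠ z₀ → dist w z₀ < ε → u w ≠ 0 := by
  classical
  -- the translated function `f`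
  set f : ℂ → ℂ := fun w => u (z₀ + w) with hfdef
  have hfa : AnalyticAt ℝ f 0 := by
    have h1 : AnalyticAt ℝ (fun w : ℂ => z₀ + w) 0 := analyticAt_const.add analyticAt_id
    have h2 : AnalyticAt ℝ u ((fun w : ℂ => z₀ + w) 0) := by simpa using hu z₀ hz₀
    exact h2.comp h1
  obtain ⟨p, hp⟩ := hfa
  obtain ⟨r, hball⟩ := hp
  have hp : HasFPowerSeriesAt f p 0 := ⟨r, hball⟩
  -- translation basics
  have hcont1 : Continuous (fun w : ℂ => z₀ + w) := by continuity
  have hcont2 : Continuous (fun z : ℂ => z - z₀) := by continuity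
  have htrans : Filter.Tendsto (fun w : ℂ => z₀ + w) (𝓝 0) (𝓝 z₀) :=
    hcont1.tendsto' 0 z₀ (by simp)
  have htrans' : Filter.Tendsto (fun z : ℂ => z - z₀) (𝓝 z₀) (𝓝 0) :=
    hcont2.tendsto' z₀ 0 (by simp)
  -- Step 1 : not all diagonal coefficients vanish
  have hnontriv : ∃ n : ℕ, ∃ w : ℂ, p n (fun _ => w) ≠ 0 := by
    by_contra hcon
    push_neg at hcon
    have hev0 : ∀ᶠ w in 𝓝 (0:ℂ), f w = 0 := by
      filter_upwards [EMetric.ball_mem_nhds (0:ℂ) hball.r_pos] with w hw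
      have hs := hball.hasSum hw
      rw [zero_add] at hs
      have hz : HasSum (fun n => p n (fun _ => w)) 0 := by
        have : (fun n : ℕ => p n (fun _ => w)) = fun _ => (0:ℂ) :=
          funext fun n => hcon n w
        rw [this]; exact hasSum_zero
      exact hs.unique hz
    have hevu : u =ᶠ[𝓝 z₀] 0 := by
      filter_upwards [htrans'.eventually hev0] with z hz
      simpa [hfdef, show z₀ + (z - z₀) = z from by ring] using hz
    have := hu.eqOn_zero_of_preconnected_of_eventuallyEq_zero hconn.isPreconnected hz₀ hevu
    obtain ⟨z, hzΩ, hzne⟩ := hne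
    exact hzne (this hzΩ)
  -- the vanishing order m = k0 + 1
  have hmin0 : ∀ k < Nat.find hnontriv, ∀ w : ℂ, p k (fun _ => w) = 0 := by
    intro k hk w
    by_contra hcq
    exact Nat.find_min hnontriv hk ⟨w, hcq⟩
  have hfind_pos : 0 < Nat.find hnontriv := by
    rw [Nat.pos_iff_ne_zero]
    intro h
    obtain ⟨w, hw⟩ := (Nat.find_eq_zero hnontriv).1 h
    apply hw
    have hcz := hp.coeff_zero (fun _ => w)
    rw [hcz]
    simpa [hfdef] using hu0
  obtain ⟨k0, hk0⟩ : ∃ k0, Nat.find hnontriv = k0 + 1 :=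
    ⟨Nat.find hnontriv - 1, (Nat.succ_pred_eq_of_pos hfind_pos).symm⟩
  have hmW : ∃ w : ℂ, p (k0 + 1) (fun _ => w) ≠ 0 := hk0 ▸ Nat.find_spec hnontriv
  have hmin : ∀ k < k0 + 1, ∀ w : ℂ, p k (fun _ => w) = 0 := hk0 ▸ hmin0
  -- partial sums up to order k0+1 vanish
  have hPS : ∀ w : ℂ, p.partialSum (k0 + 1) w = 0 := by
    intro w
    unfold FormalMultilinearSeries.partialSum
    exact Finset.sum_eq_zero fun k hk => hmin k (Finset.mem_range.1 hk) w
  -- (A) : f = O(‖w‖^(k0+1))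
  have hfO : f =O[𝓝 0] fun w : ℂ => ‖w‖ ^ (k0 + 1) := by
    have hA := hp.isBigO_sub_partialSum_pow (k0 + 1)
    have heq1 : (fun y : ℂ => f (0 + y) - p.partialSum (k0 + 1) y) = f := by
      funext y; rw [zero_add, hPS y, sub_zero]
    rwa [heq1] at hA
  -- (E) : f - (diagonal term of order k0+1) = O(‖w‖^(k0+2))
  have hE : (fun w : ℂ => f w - p (k0 + 1) (fun _ => w)) =O[𝓝 0]
      fun w : ℂ => ‖w‖ ^ (k0 + 1 + 1) := by
    have hA2 := hp.isBigO_sub_partialSum_pow (k0 + 1 + 1)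
    have heq2 : (fun y : ℂ => f (0 + y) - p.partialSum (k0 + 1 + 1) y)
        = fun w : ℂ => f w - p (k0 + 1) (fun _ => w) := by
      funext y
      rw [zero_add]
      congr 1
      unfold FormalMultilinearSeries.partialSum
      rw [Finset.sum_range_succ]
      rw [Finset.sum_eq_zero fun k hk => hmin k (Finset.mem_range.1 hk) y, zero_add]
    rwa [heq2] at hA2
  -- relating fderiv of f and u
  have hfd_eq : ∀ w : ℂ, z₀ + w ∈ Ω → fderiv ℝ f w = fderiv ℝ u (z₀ + w) := by
    intro w hw
    have hdu : DifferentiableAt ℝ u (z₀ + w) := (hu _ hw).differentiableAt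
    have h1 : HasFDerivAt (fun x : ℂ => z₀ + x) (ContinuousLinearMap.id ℝ ℂ) w := by
      simpa using (hasFDerivAt_id w).const_add z₀
    have h2 := hdu.hasFDerivAt.comp w h1
    have h3 : HasFDerivAt f (fderiv ℝ u (z₀ + w)) w := by
      simpa [hfdef, Function.comp_def] using h2
    exact h3.fderiv
  have hΩev : ∀ᶠ w in 𝓝 (0:ℂ), z₀ + w ∈ Ω := htrans.eventually (hΩ.mem_nhds hz₀)
  -- (F) : dbar f = O(‖w‖^(k0+1))
  have hdbarfO : (fun w => dbar f w) =O[𝓝 (0:ℂ)] fun w : ℂ => ‖w‖ ^ (k0 + 1) := by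
    have hca : Filter.Tendsto (fun w : ℂ => ‖a (z₀ + w)‖) (𝓝 0) (𝓝 ‖a z₀‖) := by
      have h4 := ((ha z₀ hz₀).continuousAt.tendsto).comp htrans
      have h5 : Filter.Tendsto (fun w : ℂ => a (z₀ + w)) (𝓝 0) (𝓝 (a z₀)) := by
        simpa [Function.comp_def] using h4
      exact (continuous_norm.tendsto _).comp h5
    have hcb : Filter.Tendsto (fun w : ℂ => ‖b (z₀ + w)‖) (𝓝 0) (𝓝 ‖b z₀‖) := by
      have h4 := ((hb z₀ hz₀).continuousAt.tendsto).comp htrans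
      have h5 : Filter.Tendsto (fun w : ℂ => b (z₀ + w)) (𝓝 0) (𝓝 (b z₀)) := by
        simpa [Function.comp_def] using h4
      exact (continuous_norm.tendsto _).comp h5
    have hea : ∀ᶠ w in 𝓝 (0:ℂ), ‖a (z₀ + w)‖ < ‖a z₀‖ + 1 :=
      hca.eventually_lt_const (by linarith)
    have heb : ∀ᶠ w in 𝓝 (0:ℂ), ‖b (z₀ + w)‖ < ‖b z₀‖ + 1 :=
      hcb.eventually_lt_const (by linarith)
    have hdbar_ev : ∀ᶠ w in 𝓝 (0:ℂ),
        ‖dbar f w‖ ≤ (‖a z₀‖ + ‖b z₀‖ + 2) * ‖f w‖ := by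
      filter_upwards [hΩev, hea, heb] with w hwΩ haw hbw
      have h2 := heq (z₀ + w) hwΩ
      have h3 : dbar f w = dbar u (z₀ + w) := by
        unfold dbar
        rw [hfd_eq w hwΩ]
      have h4 : dbar f w = -(a (z₀ + w) * f w + b (z₀ + w) * (starRingEnd ℂ) (f w)) := by
        rw [h3, hfdef]
        linear_combination h2
      rw [h4]
      have h5 : ‖(starRingEnd ℂ) (f w)‖ = ‖f w‖ := RCLike.norm_conj _
      calc ‖-(a (z₀ + w) * f w + b (z₀ + w) * (starRingEnd ℂ) (f w))‖
          ≤ ‖a (z₀ + w) * f w‖ + ‖b (z₀ + w) * (starRingEnd ℂ) (f w)‖ := by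
            rw [norm_neg]; exact norm_add_le _ _
        _ = ‖a (z₀ + w)‖ * ‖f w‖ + ‖b (z₀ + w)‖ * ‖f w‖ := by
            rw [norm_mul, norm_mul, h5]
        _ ≤ (‖a z₀‖ + ‖b z₀‖ + 2) * ‖f w‖ := by
            nlinarith [norm_nonneg (f w)]
    exact (Asymptotics.IsBigO.of_bound _ hdbar_ev).trans hfO
  -- (G) : fderiv f - fderiv Dm = O(‖w‖^(k0+1))
  set Dm : ℂ → ℂ := fun x => p (k0 + 1) (fun _ => x) with hDm
  have hg1 := hball.fderiv
  have hg2 := hg1.hasFPowerSeriesAt.isBigO_sub_partialSum_pow (k0 + 1)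
  have hDS : ∀ w : ℂ, p.derivSeries.partialSum (k0 + 1) w = fderiv ℝ Dm w := by
    intro w
    unfold FormalMultilinearSeries.partialSum
    rw [Finset.sum_range_succ]
    have hzero : ∀ k ∈ Finset.range k0, (p.derivSeries k) (fun _ => w) = 0 := by
      intro k hk
      rw [← fderiv_diag p k w]
      have hfun : (fun x : ℂ => p (k + 1) (fun _ => x)) = fun _ : ℂ => (0:ℂ) :=
        funext fun x => hmin (k + 1) (by have := Finset.mem_range.1 hk; omega) x
      rw [hfun]
      exact fderiv_const_apply 0
    rw [Finset.sum_eq_zero hzero, zero_add, hDm, fderiv_diag p k0 w]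
  have hgO : (fun w => fderiv ℝ f w - fderiv ℝ Dm w) =O[𝓝 (0:ℂ)]
      fun w : ℂ => ‖w‖ ^ (k0 + 1) := by
    have heq3 : (fun y : ℂ => fderiv ℝ f (0 + y) - p.derivSeries.partialSum (k0 + 1) y)
        = fun w => fderiv ℝ f w - fderiv ℝ Dm w := by
      funext y; rw [zero_add, hDS]
    rwa [heq3] at hg2
  -- dbar of the difference
  have hSO : (fun w => dbar f w - dbar Dm w) =O[𝓝 (0:ℂ)] fun w : ℂ => ‖w‖ ^ (k0 + 1) := by
    refine (Asymptotics.IsBigO.of_bound 1 ?_).trans hgO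
    refine Filter.Eventually.of_forall fun w => ?_
    have hkey : dbar f w - dbar Dm w
        = ((fderiv ℝ f w - fderiv ℝ Dm w) 1
            + Complex.I * (fderiv ℝ f w - fderiv ℝ Dm w) Complex.I) / 2 := by
      unfold dbar
      rw [ContinuousLinearMap.sub_apply, ContinuousLinearMap.sub_apply]
      ring
    rw [hkey]
    set L := fderiv ℝ f w - fderiv ℝ Dm w with hLdef
    have h1 : ‖L 1‖ ≤ ‖L‖ := by simpa using L.le_opNorm 1
    have h2 : ‖L Complex.I‖ ≤ ‖L‖ := by simpa [Complex.norm_I] using L.le_opNorm Complex.I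
    have h3 : ‖(L 1 + Complex.I * L Complex.I) / 2‖
        = ‖L 1 + Complex.I * L Complex.I‖ / 2 := by
      rw [norm_div]
      norm_num
    rw [h3]
    have h4 : ‖L 1 + Complex.I * L Complex.I‖ ≤ ‖L 1‖ + ‖L Complex.I‖ := by
      calc ‖L 1 + Complex.I * L Complex.I‖ ≤ ‖L 1‖ + ‖Complex.I * L Complex.I‖ :=
            norm_add_le _ _
        _ = ‖L 1‖ + ‖L Complex.I‖ := by rw [norm_mul, Complex.norm_I, one_mul]
    have h6 : (1:ℝ) * ‖L‖ = ‖L‖ := one_mul _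
    rw [h6]
    linarith
  have hdbarDmO : (fun w => dbar Dm w) =O[𝓝 (0:ℂ)] fun w : ℂ => ‖w‖ ^ (k0 + 1) := by
    have hid : (fun w => dbar Dm w) = fun w => dbar f w - (dbar f w - dbar Dm w) := by
      funext w; ring
    rw [hid]
    exact hdbarfO.sub hSO
  -- homogeneity of dbar Dm
  have homDm : ∀ t : ℝ, 0 < t → ∀ w : ℂ, dbar Dm (t • w) = t ^ k0 • dbar Dm w := by
    intro t ht w
    have h5 : p.derivSeries k0 (fun _ => t • w) = t ^ k0 • p.derivSeries k0 (fun _ => w) := by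
      have := (p.derivSeries k0).map_smul_univ (fun _ : Fin k0 => t) (fun _ : Fin k0 => w)
      simpa [Finset.prod_const] using this
    have h6 : fderiv ℝ Dm (t • w) = t ^ k0 • fderiv ℝ Dm w := by
      rw [hDm, fderiv_diag p k0, fderiv_diag p k0, h5]
    unfold dbar
    rw [h6]
    simp only [ContinuousLinearMap.smul_apply]
    rw [Complex.real_smul, Complex.real_smul, Complex.real_smul]
    ring
  have hdbarDm0 : ∀ w : ℂ, dbar Dm w = 0 :=
    homog_eq_zero_of_isBigO homDm hdbarDmO
  -- Dm is complex differentiable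
  have hDmdiff : ∀ w : ℂ, DifferentiableAt ℝ Dm w := by
    intro w
    have h7 := (hasFPowerSeriesOnBall_diag (k0 + 1) (p (k0 + 1))).analyticAt_of_mem
      (by simp : w ∈ Metric.eball (0:ℂ) ⊤)
    exact h7.differentiableAt
  have hCR : ∀ w : ℂ, DifferentiableAt ℂ Dm w := by
    intro w
    set L := fderiv ℝ Dm w with hLdef
    have h0 := hdbarDm0 w
    unfold dbar at h0
    rw [← hLdef] at h0
    have hLI : L Complex.I = Complex.I * L 1 := by
      linear_combination (-2 * Complex.I) * h0 + (L Complex.I) * Complex.I_sq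
    have hL2 : ∀ z : ℂ, L z = (L 1) * z := by
      intro z
      have h7 : L z = z.re • L 1 + z.im • L Complex.I := by
        conv_lhs => rw [show z = z.re • (1:ℂ) + z.im • Complex.I by
          rw [Complex.real_smul, Complex.real_smul, mul_one]
          exact (Complex.re_add_im z).symm]
        rw [map_add, map_smul, map_smul]
      rw [h7, hLI, Complex.real_smul, Complex.real_smul]
      conv_rhs => rw [← Complex.re_add_im z]
      ring
    have hFD : HasFDerivAt Dm ((L 1) • ContinuousLinearMap.id ℂ ℂ) w := by
      apply hasFDerivAt_of_restrictScalars (𝕜 := ℝ) ((hDmdiff w).hasFDerivAt)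
      ext z
      simp [hL2 z, mul_comm]
      rw [mul_comm]
      exact (hL2 z).symm
    exact hFD.differentiableAt
  -- Dm is a multiple of w^(k0+1)
  set C : ℂ := p (k0 + 1) (fun _ => (1:ℂ)) with hC
  have hhom : ∀ (t : ℝ) (w : ℂ), Dm ((t : ℂ) * w) = (t:ℂ) ^ (k0 + 1) * Dm w := by
    intro t w
    have h8 := (p (k0 + 1)).map_smul_univ (fun _ : Fin (k0+1) => t) (fun _ : Fin (k0+1) => w)
    simp only [Finset.prod_const, Finset.card_univ, Fintype.card_fin] at h8
    rw [hDm]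
    calc p (k0 + 1) (fun _ => (t:ℂ) * w) = p (k0 + 1) (fun _ => t • w) := by
          rw [show (fun _ : Fin (k0+1) => (t:ℂ) * w) = (fun _ : Fin (k0+1) => t • w) from
            funext fun _ => (Complex.real_smul (x := t) (z := w)).symm]
      _ = (t ^ (k0 + 1) : ℝ) • p (k0 + 1) (fun _ => w) := h8
      _ = (t:ℂ) ^ (k0 + 1) * p (k0 + 1) (fun _ => w) := by
          rw [Complex.real_smul]
          push_cast
          ring
  have hDmAn : AnalyticOnNhd ℂ Dm Set.univ := fun z _ =>
    Differentiable.analyticAt (fun w => hCR w) z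
  have hphi : ∀ w : ℂ, Dm w = C * w ^ (k0 + 1) := by
    have hAnphi : AnalyticOnNhd ℂ (fun w => Dm w - C * w ^ (k0 + 1)) Set.univ := by
      apply hDmAn.sub
      exact AnalyticOnNhd.mul analyticOnNhd_const (analyticOnNhd_id.pow _)
    have hzero : ∀ t : ℝ, Dm ((t:ℂ)) - C * (t:ℂ) ^ (k0 + 1) = 0 := by
      intro t
      have h9 := hhom t 1
      rw [mul_one] at h9
      have hD1 : Dm 1 = C := by rw [hDm]
      rw [h9, hD1]
      ring
    have hfreq : ∃ᶠ z in 𝓝[≠] (0:ℂ), (fun w => Dm w - C * w ^ (k0 + 1)) z = 0 := by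
      have hseq : Filter.Tendsto (fun n : ℕ => (((1:ℝ)/(n+1) : ℝ) : ℂ))
          Filter.atTop (𝓝[≠] (0:ℂ)) := by
        apply tendsto_nhdsWithin_of_tendsto_nhds_of_eventually_within
        · have h8 : Filter.Tendsto (fun n : ℕ => (1:ℝ)/(n+1)) Filter.atTop (𝓝 0) :=
            tendsto_one_div_add_atTop_nhds_zero_nat
          have h9 := (Complex.continuous_ofReal.tendsto 0).comp h8
          simpa [Function.comp_def] using h9
        · refine Filter.Eventually.of_forall fun n => ?_
          simp only [Set.mem_compl_iff, Set.mem_singleton_iff]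
          intro hcontra
          have h10 : (1:ℝ)/(n+1) = 0 := by exact_mod_cast hcontra
          have h11 : (0:ℝ) < 1/(n+1) := by positivity
          linarith
      exact hseq.frequently
        ((Filter.Eventually.of_forall (fun n : ℕ => hzero ((1:ℝ)/((n:ℝ)+1)))).frequently)
    have hEqOn := hAnphi.eqOn_zero_of_preconnected_of_frequently_eq_zero
      isPreconnected_univ (Set.mem_univ (0:ℂ)) hfreq
    intro w
    have hw := hEqOn (Set.mem_univ w)
    simpa [sub_eq_zero] using hw
  have hCne : C ≠ 0 := by
    intro hC0
    obtain ⟨w, hw⟩ := hmW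
    apply hw
    have h12 := hphi w
    rw [hC0, zero_mul] at h12
    exact h12
  -- final O-estimate
  have hO2 : (fun w : ℂ => f w - C * w ^ (k0 + 1)) =O[𝓝 (0:ℂ)]
      fun w : ℂ => ‖w‖ ^ (k0 + 1 + 1) := by
    have hrw : (fun w : ℂ => f w - p (k0 + 1) (fun _ => w))
        = fun w : ℂ => f w - C * w ^ (k0 + 1) := by
      funext w
      rw [show p (k0 + 1) (fun _ => w) = C * w ^ (k0 + 1) from hphi w]
    rwa [hrw] at hE
  have hO3 := hO2.comp_tendsto htrans'
  have hO4 : (fun z => u z - C * (z - z₀) ^ (k0 + 1)) =O[𝓝 z₀]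
      fun z => ‖z - z₀‖ ^ (k0 + 1 + 1) := by
    have hlhs : ((fun w : ℂ => f w - C * w ^ (k0 + 1)) ∘ fun z => z - z₀)
        = fun z => u z - C * (z - z₀) ^ (k0 + 1) := by
      funext z
      simp only [Function.comp_apply, hfdef]
      rw [show z₀ + (z - z₀) = z from by ring]
    have hrhs : ((fun w : ℂ => ‖w‖ ^ (k0 + 1 + 1)) ∘ fun z => z - z₀)
        = fun z => ‖z - z₀‖ ^ (k0 + 1 + 1) := rfl
    rw [hlhs, hrhs] at hO3
    exact hO3
  refine ⟨k0 + 1, C, by omega, hCne, hO4, ?_⟩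
  -- isolated zero
  obtain ⟨c, hc⟩ := hO4.bound
  rw [Metric.eventually_nhds_iff] at hc
  obtain ⟨ε₁, hε₁, hcball⟩ := hc
  have hCpos : 0 < ‖C‖ := norm_pos_iff.2 hCne
  refine ⟨min ε₁ (‖C‖ / (|c| + 1)), lt_min hε₁ (by positivity), ?_⟩
  intro w hw hdist huw
  have h1 := hcball (lt_of_lt_of_le hdist (min_le_left _ _))
  rw [huw] at h1
  have hd0 : 0 < ‖w - z₀‖ := by
    rw [norm_pos_iff]
    exact sub_ne_zero.2 hw
  have hdlt : ‖w - z₀‖ < ‖C‖ / (|c| + 1) := by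
    have h13 := lt_of_lt_of_le hdist (min_le_right _ _)
    rwa [dist_eq_norm] at h13
  have h14 : ‖(0:ℂ) - C * (w - z₀) ^ (k0 + 1)‖ = ‖C‖ * ‖w - z₀‖ ^ (k0 + 1) := by
    rw [zero_sub, norm_neg, norm_mul, norm_pow]
  have h15 : ‖‖w - z₀‖ ^ (k0 + 1 + 1)‖ = ‖w - z₀‖ ^ (k0 + 1) * ‖w - z₀‖ := by
    rw [Real.norm_eq_abs, abs_of_nonneg (by positivity), pow_succ]
  rw [h14, h15] at h1
  have h16 : ‖C‖ * ‖w - z₀‖ ^ (k0 + 1) ≤ (|c| * ‖w - z₀‖) * ‖w - z₀‖ ^ (k0 + 1) := by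
    calc ‖C‖ * ‖w - z₀‖ ^ (k0 + 1) ≤ c * (‖w - z₀‖ ^ (k0 + 1) * ‖w - z₀‖) := h1
      _ ≤ |c| * (‖w - z₀‖ ^ (k0 + 1) * ‖w - z₀‖) := by
          apply mul_le_mul_of_nonneg_right (le_abs_self c) (by positivity)
      _ = (|c| * ‖w - z₀‖) * ‖w - z₀‖ ^ (k0 + 1) := by ring
  have h17 : ‖C‖ ≤ |c| * ‖w - z₀‖ :=
    le_of_mul_le_mul_right h16 (pow_pos hd0 (k0 + 1))
  have h18 : ‖w - z₀‖ * (|c| + 1) < ‖C‖ := (lt_div_iff₀ (by positivity)).1 hdlt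
  nlinarith
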